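/- In a parallel system, if p_i ≤ p_j then for every concave loss l* : [0,1] → ℝ the global value of information satisfies VoI_G(i) ≥ VoI_G(j); in particular, the component with the lowest marginal failure probability (the most reliable component) maximizes VoI_G, regardless of the interdependence among components' states and of the adopted concave loss function. -/
import Mathlib


open scoped Classical

/-- Probability of an event `E` under weights `w` on a finite outcome space. -/
noncomputable def Pr {Ω : Type*} [Fintype Ω] (w : Ω → ℝ) (E : Ω → Prop) : ℝ :=
  ∑ ω ∈ Finset.univ.filter E, w ω

/-- Conditional probability `P[A | B]`. -/
noncomputable def cPr {Ω : Type*} [Fintype Ω] (w : Ω → ℝ) (A B : Ω → Prop) : ℝ :=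
  Pr w (fun ω => A ω ∧ B ω) / Pr w B

/-- Posterior expected loss of inspecting a component with binary inspection outcome `y`
(`y = false` is an alarm), where `F` is the system-failure event and `l` the optimal
expected loss as a function of the system failure probability. -/
noncomputable def postLoss {Ω : Type*} [Fintype Ω] (w : Ω → ℝ) (F : Ω → Prop)
    (y : Ω → Bool) (l : ℝ → ℝ) : ℝ :=
  Pr w (fun ω => y ω = false) * l (cPr w F (fun ω => y ω = false))
    + (1 - Pr w (fun ω => y ω = false)) * l (cPr w F (fun ω => y ω = true))

/-- Global value of information of inspecting a component with inspection outcome `y`. -/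
noncomputable def VoIG {Ω : Type*} [Fintype Ω] (w : Ω → ℝ) (F : Ω → Prop)
    (y : Ω → Bool) (l : ℝ → ℝ) : ℝ :=
  l (Pr w F) - postLoss w F y l

section Helpers

variable {Ω : Type*} [Fintype Ω] (w : Ω → ℝ)

lemma Pr_ite (E : Ω → Prop) : Pr w E = ∑ ω, if E ω then w ω else 0 :=
  Finset.sum_filter _ _

lemma Pr_nonneg (hw0 : ∀ ω, 0 ≤ w ω) (E : Ω → Prop) : 0 ≤ Pr w E :=
  Finset.sum_nonneg fun ω _ => hw0 ω

lemma Pr_congr {E E' : Ω → Prop} (h : ∀ ω, E ω ↔ E' ω) : Pr w E = Pr w E' := by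
  rw [Pr_ite, Pr_ite]
  exact Finset.sum_congr rfl fun ω _ => if_congr (h ω) rfl rfl

lemma Pr_mono (hw0 : ∀ ω, 0 ≤ w ω) {E E' : Ω → Prop} (h : ∀ ω, E ω → E' ω) :
    Pr w E ≤ Pr w E' := by
  rw [Pr_ite, Pr_ite]
  apply Finset.sum_le_sum
  intro ω _
  by_cases hE : E ω
  · simp [hE, h ω hE]
  · simp only [hE, if_false]
    split <;> [exact hw0 ω; exact le_refl 0]

lemma Pr_true (hw1 : ∑ ω, w ω = 1) : Pr w (fun _ => True) = 1 := by
  simpa [Pr] using hw1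

lemma Pr_split (E P : Ω → Prop) :
    Pr w (fun ω => E ω ∧ P ω) + Pr w (fun ω => E ω ∧ ¬ P ω) = Pr w E := by
  rw [Pr_ite, Pr_ite, Pr_ite, ← Finset.sum_add_distrib]
  exact Finset.sum_congr rfl fun ω _ => by
    by_cases hE : E ω <;> by_cases hP : P ω <;> simp [hE, hP]

lemma Pr_partition {N : ℕ} (s : Ω → Fin N → Bool) (A : Ω → Prop) :
    Pr w A = ∑ σ : Fin N → Bool, Pr w (fun ω => A ω ∧ s ω = σ) := by
  simp_rw [Pr_ite]
  rw [Finset.sum_comm]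
  apply Finset.sum_congr rfl
  intro ω _
  by_cases hA : A ω
  · simp only [hA, true_and]
    rw [Finset.sum_ite_eq]
    simp
  · simp [hA]

end Helpers

lemma chord_lemma (l : ℝ → ℝ) (hl : ConcaveOn ℝ (Set.Icc (0:ℝ) 1) l)
    (a b a' b' h h' : ℝ) (hb0 : 0 ≤ b) (ha1 : a ≤ 1)
    (h1 : b ≤ b') (h2 : b' ≤ a') (h3 : a' ≤ a)
    (hh'0 : 0 ≤ h') (hh'1 : h' ≤ 1)
    (hmean : h * a + (1 - h) * b = h' * a' + (1 - h') * b') :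
    h * l a + (1 - h) * l b ≤ h' * l a' + (1 - h') * l b' := by
  rcases eq_or_lt_of_le (h1.trans (h2.trans h3)) with heq | hba
  · have e1 : a = b := heq.symm
    have e2 : a' = b := le_antisymm (by linarith) (by linarith)
    have e3 : b' = b := le_antisymm (by linarith) h1
    rw [e1, e2, e3]
    have key : ∀ c : ℝ, c * l b + (1 - c) * l b = l b := fun c => by ring
    rw [key, key]
  · have hab : (0:ℝ) < a - b := by linarith
    have hmemA : a ∈ Set.Icc (0:ℝ) 1 := ⟨by linarith, ha1⟩
    have hmemB : b ∈ Set.Icc (0:ℝ) 1 := ⟨hb0, by linarith⟩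
    set t := (a' - b) / (a - b) with ht
    set u := (b' - b) / (a - b) with hu
    have ht0 : 0 ≤ t := div_nonneg (by linarith) hab.le
    have ht1 : t ≤ 1 := (div_le_one hab).2 (by linarith)
    have hu0 : 0 ≤ u := div_nonneg (by linarith) hab.le
    have hu1 : u ≤ 1 := (div_le_one hab).2 (by linarith)
    have htc : t * (a - b) = a' - b := div_mul_cancel₀ _ hab.ne'
    have huc : u * (a - b) = b' - b := div_mul_cancel₀ _ hab.ne'
    have hA' : a' = t * a + (1 - t) * b := by linear_combination -htc
    have hB' : b' = u * a + (1 - u) * b := by linear_combination -huc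
    have la' : t * l a + (1 - t) * l b ≤ l a' := by
      have := hl.2 hmemA hmemB ht0 (by linarith : (0:ℝ) ≤ 1 - t) (by ring)
      simpa [smul_eq_mul, ← hA'] using this
    have lb' : u * l a + (1 - u) * l b ≤ l b' := by
      have := hl.2 hmemA hmemB hu0 (by linarith : (0:ℝ) ≤ 1 - u) (by ring)
      simpa [smul_eq_mul, ← hB'] using this
    clear_value t u
    have hmean' : h * a + (1 - h) * b
        = h' * (t * a + (1 - t) * b) + (1 - h') * (u * a + (1 - u) * b) := by
      rw [← hA', ← hB']; exact hmean
    have key : (h' * t + (1 - h') * u - h) * (a - b) = 0 := by linear_combination -hmean'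
    have hw : h' * t + (1 - h') * u = h := by
      rcases mul_eq_zero.1 key with hz | hz
      · linarith
      · exact absurd hz hab.ne'
    calc h * l a + (1 - h) * l b
        = h' * (t * l a + (1 - t) * l b) + (1 - h') * (u * l a + (1 - u) * l b) := by
          rw [← hw]; ring
      _ ≤ h' * l a' + (1 - h') * l b' :=
          add_le_add (mul_le_mul_of_nonneg_left la' hh'0)
            (mul_le_mul_of_nonneg_left lb' (by linarith))

set_option maxHeartbeats 1000000 in
/-- In a parallel system (the system fails iff every component fails), with the
same inspection error rates for all components, if `p_i ≤ p_j` then for every concave loss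
`l*` the global value of information satisfies `VoI_G(i) ≥ VoI_G(j)`: the most reliable
component maximizes `VoI_G`, regardless of the interdependence among components' states and
of the adopted concave loss function. -/
theorem parallel_global_prefers_most_reliable {Ω : Type*} [Fintype Ω] {N : ℕ} (w : Ω → ℝ)
    (hw0 : ∀ ω, 0 ≤ w ω) (hw1 : ∑ ω, w ω = 1)
    (s : Ω → Fin N → Bool) (y : Fin N → Ω → Bool)
    (εFA εFS : ℝ) (hFA0 : 0 ≤ εFA) (hFA : εFA < 1/2) (hFS0 : 0 ≤ εFS) (hFS : εFS < 1/2)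
    (hemit : ∀ (k : Fin N) (σ : Fin N → Bool), 0 < Pr w (fun ω => s ω = σ) →
      cPr w (fun ω => y k ω = false) (fun ω => s ω = σ)
        = if σ k = true then εFA else 1 - εFS)
    (i j : Fin N)
    (hi0 : 0 < Pr w (fun ω => y i ω = false)) (hi1 : Pr w (fun ω => y i ω = false) < 1)
    (hj0 : 0 < Pr w (fun ω => y j ω = false)) (hj1 : Pr w (fun ω => y j ω = false) < 1)
    (hpij : Pr w (fun ω => s ω i = false) ≤ Pr w (fun ω => s ω j = false))
    (l : ℝ → ℝ) (hl : ConcaveOn ℝ (Set.Icc (0:ℝ) 1) l) :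
    VoIG w (fun ω => ∀ k, s ω k = false) (y j) l
      ≤ VoIG w (fun ω => ∀ k, s ω k = false) (y i) l := by
  have hKpos : (0:ℝ) < 1 - εFA - εFS := by linarith
  -- joint probabilities
  have joint : ∀ (k : Fin N) (σ : Fin N → Bool),
      Pr w (fun ω => y k ω = false ∧ s ω = σ)
        = (if σ k = true then εFA else 1 - εFS) * Pr w (fun ω => s ω = σ) := by
    intro k σ
    rcases (Pr_nonneg w hw0 (fun ω => s ω = σ)).lt_or_eq with hpos | hzero
    · have hc := hemit k σ hpos
      rw [cPr, div_eq_iff hpos.ne'] at hc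
      exact hc
    · have h1 : Pr w (fun ω => y k ω = false ∧ s ω = σ) ≤ Pr w (fun ω => s ω = σ) :=
        Pr_mono w hw0 fun ω hω => hω.2
      have h2 := Pr_nonneg w hw0 (fun ω => y k ω = false ∧ s ω = σ)
      rw [le_antisymm (h1.trans hzero.ge) h2, ← hzero, mul_zero]
  -- total mass one
  have hsum1 : ∑ σ : Fin N → Bool, Pr w (fun ω => s ω = σ) = 1 := by
    have h1 := (Pr_partition w s (fun _ => True)).symm
    rw [Pr_true w hw1] at h1
    rw [← h1]
    exact Finset.sum_congr rfl fun σ _ => Pr_congr w fun ω => by simp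
  -- marginal failure probabilities as sums
  have hpk : ∀ k : Fin N, Pr w (fun ω => s ω k = false)
      = ∑ σ : Fin N → Bool, (if σ k = true then (0:ℝ) else 1) * Pr w (fun ω => s ω = σ) := by
    intro k
    rw [Pr_partition w s (fun ω => s ω k = false)]
    apply Finset.sum_congr rfl
    intro σ _
    cases hσ : σ k with
    | true =>
      simp only [hσ, if_true, zero_mul]
      have he : ∀ ω, (s ω k = false ∧ s ω = σ) ↔ False := by
        intro ω
        constructor
        · rintro ⟨hf, rfl⟩; rw [hf] at hσ; exact Bool.false_ne_true hσ
        · exact False.elim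
      rw [Pr_congr w he]
      simp [Pr]
    | false =>
      simp only [hσ, Bool.false_eq_true, if_false, one_mul]
      apply Pr_congr
      intro ω
      exact ⟨And.right, fun he => ⟨by rw [he, hσ], he⟩⟩
  -- alarm probability formula
  have hhk : ∀ k : Fin N, Pr w (fun ω => y k ω = false)
      = εFA + (1 - εFA - εFS) * Pr w (fun ω => s ω k = false) := by
    intro k
    rw [Pr_partition w s (fun ω => y k ω = false)]
    have step : ∀ σ : Fin N → Bool, Pr w (fun ω => y k ω = false ∧ s ω = σ)
        = εFA * Pr w (fun ω => s ω = σ)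
          + (1 - εFA - εFS) * ((if σ k = true then (0:ℝ) else 1) * Pr w (fun ω => s ω = σ)) := by
      intro σ
      rw [joint k σ]
      cases hσ : σ k <;> simp [hσ] <;> ring
    rw [Finset.sum_congr rfl fun σ _ => step σ, Finset.sum_add_distrib, ← Finset.mul_sum,
      ← Finset.mul_sum, hsum1, ← hpk k, mul_one]
  set F : Ω → Prop := fun ω => ∀ k, s ω k = false with hFdef
  have hq0 : 0 ≤ Pr w F := Pr_nonneg w hw0 F
  have hqp : ∀ k : Fin N, Pr w F ≤ Pr w (fun ω => s ω k = false) :=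
    fun k => Pr_mono w hw0 fun ω hω => hω k
  have hpk1 : ∀ k : Fin N, Pr w (fun ω => s ω k = false) ≤ 1 := by
    intro k
    have h := Pr_mono w hw0 (E := fun ω => s ω k = false) (E' := fun _ => True)
      (fun ω _ => trivial)
    rwa [Pr_true w hw1] at h
  have hFeq : Pr w F = Pr w (fun ω => s ω = fun _ => false) :=
    Pr_congr w fun ω => ⟨fun h => funext h, fun h k => congrFun h k⟩
  -- joint of alarm and system failure
  have hyFf : ∀ k : Fin N, Pr w (fun ω => y k ω = false ∧ F ω) = (1 - εFS) * Pr w F := by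
    intro k
    have e : Pr w (fun ω => y k ω = false ∧ F ω)
        = Pr w (fun ω => y k ω = false ∧ s ω = fun _ => false) :=
      Pr_congr w fun ω => and_congr_right fun _ =>
        ⟨fun h => funext h, fun h m => congrFun h m⟩
    rw [e, joint k (fun _ => false)]
    simp only [Bool.false_eq_true, if_false]
    rw [← hFeq]
  have hyFt : ∀ k : Fin N, Pr w (fun ω => y k ω = true ∧ F ω) = εFS * Pr w F := by
    intro k
    have split := Pr_split w F (fun ω => y k ω = false)
    have e1 : Pr w (fun ω => F ω ∧ y k ω = false) = (1 - εFS) * Pr w F := by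
      rw [Pr_congr w (fun ω => and_comm)]; exact hyFf k
    have e2 : Pr w (fun ω => F ω ∧ ¬ (y k ω = false))
        = Pr w (fun ω => y k ω = true ∧ F ω) :=
      Pr_congr w fun ω => by cases hb : y k ω <;> simp [hb]
    linear_combination split - e1 - e2
  -- probability of no alarm
  have hyt : ∀ k : Fin N, Pr w (fun ω => y k ω = true)
      = 1 - Pr w (fun ω => y k ω = false) := by
    intro k
    have split := Pr_split w (fun _ => True) (fun ω => y k ω = false)
    have e1 : Pr w (fun ω => True ∧ y k ω = false) = Pr w (fun ω => y k ω = false) :=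
      Pr_congr w fun ω => by simp
    have e2 : Pr w (fun ω => True ∧ ¬ (y k ω = false)) = Pr w (fun ω => y k ω = true) :=
      Pr_congr w fun ω => by cases hb : y k ω <;> simp [hb]
    rw [Pr_true w hw1, e1, e2] at split
    linarith
  -- conditional probabilities
  have cfalse : ∀ k : Fin N, cPr w F (fun ω => y k ω = false)
      = (1 - εFS) * Pr w F / Pr w (fun ω => y k ω = false) := by
    intro k
    rw [cPr]
    congr 1
    rw [Pr_congr w (fun ω => and_comm)]
    exact hyFf k
  have ctrue : ∀ k : Fin N, cPr w F (fun ω => y k ω = true)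
      = εFS * Pr w F / (1 - Pr w (fun ω => y k ω = false)) := by
    intro k
    rw [cPr, hyt k]
    congr 1
    rw [Pr_congr w (fun ω => and_comm)]
    exact hyFt k
  -- abbreviations
  set q := Pr w F with hqdef
  set hI := Pr w (fun ω => y i ω = false) with hIdef
  set hJ := Pr w (fun ω => y j ω = false) with hJdef
  set pI := Pr w (fun ω => s ω i = false) with pIdef
  set pJ := Pr w (fun ω => s ω j = false) with pJdef
  have hhi : hI = εFA + (1 - εFA - εFS) * pI := hhk i
  have hhj : hJ = εFA + (1 - εFA - εFS) * pJ := hhk j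
  have hIJ : hI ≤ hJ := by nlinarith
  have hqpi : q ≤ pI := hqp i
  have hpI1 : pI ≤ 1 := hpk1 i
  have hpJ1 : pJ ≤ 1 := hpk1 j
  -- unfold the goal
  rw [VoIG, VoIG]
  apply sub_le_sub_left
  rw [postLoss, postLoss, cfalse i, cfalse j, ctrue i, ctrue j]
  have h1mI : (0:ℝ) < 1 - hI := by linarith
  have h1mJ : (0:ℝ) < 1 - hJ := by linarith
  have hb0 : 0 ≤ εFS * q / (1 - hI) := div_nonneg (mul_nonneg hFS0 hq0) h1mI.le
  have ha1 : (1 - εFS) * q / hI ≤ 1 := by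
    rw [div_le_one hi0]
    nlinarith [mul_nonneg hFA0 (by linarith : (0:ℝ) ≤ 1 - pI),
      mul_nonneg (by linarith : (0:ℝ) ≤ 1 - εFS) (by linarith : (0:ℝ) ≤ pI - q)]
  have hbb : εFS * q / (1 - hI) ≤ εFS * q / (1 - hJ) := by
    gcongr
  have hJle : hJ ≤ 1 - εFS := by nlinarith
  have hba' : εFS * q / (1 - hJ) ≤ (1 - εFS) * q / hJ := by
    rw [div_le_div_iff₀ h1mJ hj0]
    nlinarith [mul_nonneg hq0 (by linarith : (0:ℝ) ≤ 1 - εFS - hJ)]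
  have haa : (1 - εFS) * q / hJ ≤ (1 - εFS) * q / hI := by
    gcongr
    exact mul_nonneg (by linarith) hq0
  have hmean : hI * ((1 - εFS) * q / hI) + (1 - hI) * (εFS * q / (1 - hI))
      = hJ * ((1 - εFS) * q / hJ) + (1 - hJ) * (εFS * q / (1 - hJ)) := by
    field_simp
  exact chord_lemma l hl _ _ _ _ hI hJ hb0 ha1 hbb hba' haa hj0.le (by linarith) hmean
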